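/- If K > 0 and β > 0, then the unique critical point of t ↦ Λ(t,T) in (0,T) is t₀ with e^{2Kt₀} = (1 + (β/(2+β))(1 - e^{-KT}))·e^{KT}, and this point satisfies 0 < t₀ < T. -/

import Mathlib

open Real

theorem lambda_crit_point_K_pos (β K T : ℝ) (hK : 0 < K) (hβ : 0 < β) (hT : 0 < T)
    (Λ : ℝ → ℝ)
    (hΛ : ∀ t, Λ t = 1 + β * (1 - exp (-K * (T - t))) + (β + β ^ 2) * (1 - exp (-K * t))
        + (β ^ 2 / 2) * (exp (-K * (t + T)) - exp (-K * (T - t)))) :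
    ∃ t₀ : ℝ, 0 < t₀ ∧ t₀ < T
      ∧ exp (2 * K * t₀) = (1 + (β / (2 + β)) * (1 - exp (-K * T))) * exp (K * T)
      ∧ deriv Λ t₀ = 0
      ∧ ∀ t, deriv Λ t = 0 → t = t₀ := by
  have hΛeq : Λ = fun t => 1 + β * (1 - exp (-K * (T - t))) + (β + β ^ 2) * (1 - exp (-K * t))
        + (β ^ 2 / 2) * (exp (-K * (t + T)) - exp (-K * (T - t))) := funext hΛ
  subst hΛeq
  set x : ℝ := exp (-K * T) with hxdef
  set y : ℝ := exp (K * T) with hydef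
  have hx : (0:ℝ) < x := exp_pos _
  have hy : (0:ℝ) < y := exp_pos _
  have hx1 : x < 1 := by
    rw [hxdef, exp_lt_one_iff]; nlinarith
  have hy1 : 1 < y := by
    have := exp_lt_exp.mpr (show (0:ℝ) < K * T by positivity)
    rw [hydef]; simpa using this
  have hxy : x * y = 1 := by
    rw [hxdef, hydef, ← exp_add, show -K * T + K * T = 0 by ring, exp_zero]
  set A : ℝ := β + β ^ 2 - (β ^ 2 / 2) * x with hA
  set B : ℝ := (β + β ^ 2 / 2) * x with hB
  have hBpos : 0 < B := by rw [hB]; positivity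
  set R : ℝ := 1 + (β / (2 + β)) * (1 - x) with hR
  have hc : 0 < β / (2 + β) := div_pos hβ (by linarith)
  have hc1 : β / (2 + β) < 1 := by rw [div_lt_one (by linarith)]; linarith
  have hR1 : 1 < R := by
    rw [hR]; nlinarith [mul_pos hc (show (0:ℝ) < 1 - x by linarith)]
  have hRpos : 0 < R := by linarith
  have hRy1 : 1 < R * y := by nlinarith
  have hRypos : 0 < R * y := by positivity
  have hAB : A = B * (R * y) := by
    have h1 : B * (R * y) = (β + β ^ 2 / 2) * R * (x * y) := by rw [hB]; ring
    rw [hxy, mul_one] at h1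
    rw [h1, hA, hR]
    field_simp
    ring
  have hRx : R * x < 1 := by
    have h2 : (β / (2 + β)) * x < β / (2 + β) := mul_lt_of_lt_one_right hc hx1
    have h3 : 0 < 1 - x := by linarith
    have h4 : 0 < 1 - (β / (2 + β)) * x := by linarith
    rw [hR]; nlinarith [mul_pos h3 h4]
  have hRy : R < y := by nlinarith
  -- derivative formula
  have hderiv : ∀ t, deriv (fun t => 1 + β * (1 - exp (-K * (T - t)))
      + (β + β ^ 2) * (1 - exp (-K * t))
      + (β ^ 2 / 2) * (exp (-K * (t + T)) - exp (-K * (T - t)))) t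
      = K * exp (-K * t) * (A - B * exp (2 * K * t)) := by
    intro t
    have e1 : HasDerivAt (fun t : ℝ => -K * (T - t)) K t := by
      simpa using ((hasDerivAt_id t).const_sub T).const_mul (-K)
    have e2 : HasDerivAt (fun t : ℝ => -K * t) (-K) t := by
      simpa using (hasDerivAt_id t).const_mul (-K)
    have e3 : HasDerivAt (fun t : ℝ => -K * (t + T)) (-K) t := by
      simpa using ((hasDerivAt_id t).add_const T).const_mul (-K)
    have E1 := e1.exp
    have E2 := e2.exp
    have E3 := e3.exp
    have h := (((hasDerivAt_const t (1:ℝ)).add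
        (((hasDerivAt_const t (1:ℝ)).sub E1).const_mul β)).add
        (((hasDerivAt_const t (1:ℝ)).sub E2).const_mul (β + β ^ 2))).add
        ((E3.sub E1).const_mul (β ^ 2 / 2))
    refine h.deriv.trans ?_
    rw [show -K * (T - t) = -K * t + (2 * K * t + -K * T) by ring,
        show -K * (t + T) = -K * t + -K * T by ring]
    simp only [exp_add]
    rw [hA, hB, hxdef]
    ring
  refine ⟨log (R * y) / (2 * K), ?_, ?_, ?_, ?_, ?_⟩
  · exact div_pos (log_pos hRy1) (by linarith)
  · rw [div_lt_iff₀ (by linarith : (0:ℝ) < 2 * K), ← exp_lt_exp, exp_log hRypos]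
    have hyy : exp (T * (2 * K)) = y * y := by
      rw [hydef, ← exp_add]; ring_nf
    rw [hyy]
    nlinarith
  · rw [show 2 * K * (log (R * y) / (2 * K)) = log (R * y) by field_simp,
      exp_log hRypos]
  · rw [hderiv]
    rw [show 2 * K * (log (R * y) / (2 * K)) = log (R * y) by field_simp,
      exp_log hRypos, ← hAB]
    ring
  · intro t ht
    rw [hderiv] at ht
    have h1 : A - B * exp (2 * K * t) = 0 := by
      have hpos := mul_pos hK (exp_pos (-K * t))
      rcases mul_eq_zero.mp ht with h | h
      · exact absurd h (ne_of_gt hpos)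
      · exact h
    have h2 : B * exp (2 * K * t) = B * (R * y) := by linarith
    have h3 : exp (2 * K * t) = R * y := mul_left_cancel₀ (ne_of_gt hBpos) h2
    have h4 : exp (2 * K * t) = exp (log (R * y)) := by rw [h3, exp_log hRypos]
    have h5 : 2 * K * t = log (R * y) := exp_injective h4
    field_simp
    linarith
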